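/- Let x ≠ y ∈ ℝ^P with the same 'marked' coordinates along A, and suppose all lattice points of each fundamental type C marked chain-order polytope are exactly the indicator vectors 1_{M_O(J)}, J ∈ 𝒥ₖ. Then the monomials z^{ξ(1_{M_O(J)})} = Π_{i=1}^k z_{i, w^{O,J}(i)}, over all J ∈ 𝒥ₖ and all k, are pairwise distinct. -/

import Mathlib

open scoped Classical Pointwise

noncomputable section

/-- Position of `j` in the total order `1 ⋖ … ⋖ n ⋖ -n ⋖ … ⋖ -1` on `N`. -/
def ordKey (n : ℕ) (j : ℤ) : ℤ := if 0 < j then j else 2 * n + 1 + j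

/-- Membership in the type C Gelfand–Tsetlin poset `P`:
pairs `(i,j)` with `1 ≤ i ≤ n` and `i ≤ |j| ≤ n`. -/
def inP (n : ℕ) (p : ℤ × ℤ) : Prop :=
  1 ≤ p.1 ∧ p.1 ≤ (n : ℤ) ∧ p.1 ≤ |p.2| ∧ |p.2| ≤ (n : ℤ)

/-- The order relation `⪯` of `P`: `(i₁,j₁) ⪯ (i₂,j₂)` iff `i₁ ≤ i₂` and `j₁ ⩽̇ j₂`. -/
def ple (n : ℕ) (p q : ℤ × ℤ) : Prop :=
  p.1 ≤ q.1 ∧ ordKey n p.2 ≤ ordKey n q.2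

/-- Strict version of `⪯`. -/
def plt (n : ℕ) (p q : ℤ × ℤ) : Prop := ple n p q ∧ p ≠ q

/-- The elements of `N = {1,…,n,-n,…,-1}` listed in increasing `⋖` order. -/
def jList (n : ℕ) : List ℤ :=
  ((List.range n).map fun t => (t : ℤ) + 1) ++ ((List.range n).map fun t => (t : ℤ) - n)

/-- All pairs `(i,j)` with `i ∈ [1,n]`, `j ∈ N`, ordered first by `i` increasing,
then by `j` increasing with respect to `⋖`. -/
def posList (n : ℕ) : List (ℤ × ℤ) :=
  (List.range n).flatMap fun a => (jList n).map fun j => ((a : ℤ) + 1, j)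

/-- `P` as a finite set. -/
def Pfin (n : ℕ) : Finset (ℤ × ℤ) := (posList n).toFinset.filter (inP n)

/-- `N` as a finite set. -/
def Nfin (n : ℕ) : Finset ℤ := (jList n).toFinset

/-- The diagonal `A = {(i,i) : 1 ≤ i ≤ n}`. -/
def Aset (n : ℕ) : Finset (ℤ × ℤ) :=
  (Finset.range n).image fun t => (((t : ℤ) + 1, (t : ℤ) + 1) : ℤ × ℤ)

/-- Order ideals (downward closed subsets) of `P`. -/
def IsIdeal (n : ℕ) (J : Finset (ℤ × ℤ)) : Prop :=
  (∀ p ∈ J, inP n p) ∧ ∀ p ∈ J, ∀ q ∈ Pfin n, ple n q p → q ∈ J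

/-- The set of `≺`-maximal elements of `J`. -/
def maxPrec (n : ℕ) (J : Finset (ℤ × ℤ)) : Finset (ℤ × ℤ) :=
  J.filter fun p => ∀ q ∈ J, ple n p q → q = p

/-- `M_O(J) = (J ∩ O) ∪ max_≺(J)`. -/
def MO (n : ℕ) (O J : Finset (ℤ × ℤ)) : Finset (ℤ × ℤ) := (J ∩ O) ∪ maxPrec n J

/-- The permutation `w_M`: the product of the transpositions `s_{i,j}` over `(i,j) ∈ M`,
ordered first by `i` increasing and then by `j` increasing with respect to `⋖`
(the leftmost factor acts last). -/
def wPerm (n : ℕ) (M : Finset (ℤ × ℤ)) : Equiv.Perm ℤ :=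
  (((posList n).filter fun p => decide (p ∈ M)).map fun p => Equiv.swap p.1 p.2).prod

/-- `w^{O,J} = w_O⁻¹ ⬝ w_{M_O(J)}`. -/
def wOJ (n : ℕ) (O J : Finset (ℤ × ℤ)) : Equiv.Perm ℤ :=
  (wPerm n O)⁻¹ * wPerm n (MO n O J)

/-- The principal order ideal `⟨i,j⟩` of `(i,j) ∈ P`. -/
def princ (n : ℕ) (p : ℤ × ℤ) : Finset (ℤ × ℤ) := (Pfin n).filter fun q => ple n q p

/-- `r(i,j) = w^{O,⟨i,j⟩}(i)`. -/
def rMap (n : ℕ) (O : Finset (ℤ × ℤ)) (i j : ℤ) : ℤ := wOJ n O (princ n (i, j)) i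

/-- Inverse of `ordKey` (on the relevant range `[1, 2n]`). -/
def invOrdKey (n : ℕ) (t : ℤ) : ℤ := if t ≤ (n : ℤ) then t else t - (2 * n + 1)

/-- The `⋖`-maximal `j'` with `j' ⋖ j` and `(i,j') ∈ O`. -/
def prevO (n : ℕ) (O : Finset (ℤ × ℤ)) (i j : ℤ) : ℤ :=
  invOrdKey n (((((Nfin n).filter fun j' => (i, j') ∈ O ∧ ordKey n j' < ordKey n j).image
    (ordKey n)).max).unbotD 0)

/-- The pipe-dream linear transform `ξ` of `ℝ^P` (coordinates outside `P` are untouched):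
`ξ(ε_{i,i}) = ε_{i,r(i,i)}` and `ξ(ε_{i,j}) = ε_{i,r(i,j)} - ε_{i,r(i,j')}` for `j ≠ i`,
where `j'` is `⋖`-maximal with `j' ⋖ j` and `(i,j') ∈ O`. -/
def xiMap (n : ℕ) (O : Finset (ℤ × ℤ)) (x : (ℤ × ℤ) → ℝ) : (ℤ × ℤ) → ℝ := fun q =>
  if inP n q then
    (∑ j ∈ (Nfin n).filter (fun j => inP n (q.1, j) ∧ rMap n O q.1 j = q.2), x (q.1, j))
    - (∑ j ∈ (Nfin n).filter
        (fun j => inP n (q.1, j) ∧ j ≠ q.1 ∧ rMap n O q.1 (prevO n O q.1 j) = q.2), x (q.1, j))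
  else x q

/-- Indicator vector `1_{M_O(J)} ∈ ℝ^P`. -/
def indicMO (n : ℕ) (O J : Finset (ℤ × ℤ)) : (ℤ × ℤ) → ℝ := fun p =>
  if p ∈ MO n O J then 1 else 0

/-- The fundamental marked chain-order polytope `𝒬_O(ω_k)`:
the convex hull of the vectors `1_{M_O(J)}`, `J ∈ 𝒥ₖ`. -/
def QOfund (n : ℕ) (O : Finset (ℤ × ℤ)) (k : ℕ) : Set ((ℤ × ℤ) → ℝ) :=
  convexHull ℝ {x | ∃ J : Finset (ℤ × ℤ),
    IsIdeal n J ∧ (J ∩ Aset n).card = k ∧ x = indicMO n O J}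

/-- The marked chain-order polytope `𝒬_O(λ)` for `λ = a₁ω₁ + … + a_nω_n`:
the Minkowski sum `a₁𝒬_O(ω₁) + … + a_n𝒬_O(ω_n)`. -/
def QO (n : ℕ) (O : Finset (ℤ × ℤ)) (a : ℕ → ℕ) : Set ((ℤ × ℤ) → ℝ) :=
  ∑ k ∈ Finset.Icc 1 n, a k • QOfund n O k

/-- Integrality (lattice point) predicate. -/
def IsLat (x : (ℤ × ℤ) → ℝ) : Prop := ∀ p, ∃ m : ℤ, x p = m

/-- Type B: `λ(i) = a_i + … + a_{n-1} + a_n/2`. -/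
def lamB (n : ℕ) (a : ℕ → ℕ) (i : ℤ) : ℝ :=
  (∑ t ∈ Finset.Icc i.toNat (n - 1), (a t : ℝ)) + (a n : ℝ) / 2

/-- The type B poset polytope `𝒬^B_O(λ)` (H-description with factor `1/2`
on the coordinates in `B = {(i,-i)}`). -/
def QB (n : ℕ) (O : Finset (ℤ × ℤ)) (lam : ℤ → ℝ) : Set ((ℤ × ℤ) → ℝ) :=
  {x | (∀ i : ℤ, 1 ≤ i → i ≤ (n : ℤ) → x (i, i) = lam i) ∧
    (∀ p, inP n p → 0 ≤ x p) ∧ (∀ p, ¬ inP n p → x p = 0) ∧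
    ∀ (pq rs : ℤ × ℤ) (c : List (ℤ × ℤ)), pq ∈ O → inP n rs →
      (∀ q ∈ c, inP n q ∧ q ∉ O) →
      List.Chain' (plt n) (pq :: (c ++ [rs])) →
      (c.map x).sum ≤ x pq - (if rs.2 = -rs.1 then (1 : ℝ) / 2 else 1) * x rs}

/-- The point `x^{J,D}`. -/
def xJD (n : ℕ) (O J : Finset (ℤ × ℤ)) (D : Finset ℤ) : (ℤ × ℤ) → ℝ := fun p =>
  if p ∈ MO n O J then (if p.2 = -p.1 ∧ p.1 ∉ D then 2 else 1) else 0

/-- The projection `π : ℝ^P → ℝ^{P∖A}` (realized by zeroing the `A`-coordinates). -/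
def piA (x : (ℤ × ℤ) → ℝ) : (ℤ × ℤ) → ℝ := fun p => if p.2 = p.1 then 0 else x p

/-- The transformed type B poset polytope `Π^B_O(λ) = πξ(𝒬^B_O(λ))`. -/
def PiB (n : ℕ) (O : Finset (ℤ × ℤ)) (a : ℕ → ℕ) : Set ((ℤ × ℤ) → ℝ) :=
  (fun x => piA (xiMap n O x)) '' QB n O (lamB n a)

/-- The point `y^D ∈ ℝ^{P∖A}`. -/
def yD (D : Finset ℤ) : (ℤ × ℤ) → ℝ := fun p => if p.2 = -p.1 ∧ p.1 ∈ D then 1 else 0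

namespace Stmt13Aux

/-! ### Basic facts about `ordKey`, `jList`, `posList`, `Pfin` -/

lemma mem_jList {n : ℕ} {j : ℤ} : j ∈ jList n ↔ 1 ≤ j.natAbs ∧ j.natAbs ≤ n := by
  simp [jList]
  constructor
  · rintro (⟨a, ha, rfl⟩ | ⟨a, ha, rfl⟩) <;> omega
  · rintro ⟨h1, h2⟩
    rcases le_or_gt 0 j with h | h
    · exact Or.inl ⟨(j-1).toNat, by omega, by omega⟩
    · exact Or.inr ⟨(j+n).toNat, by omega, by omega⟩

lemma ordKey_inj {n : ℕ} {j j' : ℤ} (h2 : j.natAbs ≤ n) (h2' : j'.natAbs ≤ n)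
    (h : ordKey n j = ordKey n j') : j = j' := by
  simp only [ordKey] at h; split_ifs at h <;> omega

lemma ordKey_lower {n : ℕ} {i j : ℤ} (hi : 0 ≤ i) (hij : i ≤ (j.natAbs : ℤ))
    (hn : j.natAbs ≤ n) : i ≤ ordKey n j := by
  simp only [ordKey]; split_ifs <;> omega

lemma ordKey_pos_self {i : ℤ} (hi : 0 < i) (n : ℕ) : ordKey n i = i := if_pos hi

lemma inP_natAbs {n : ℕ} {i j : ℤ} (h : inP n (i, j)) :
    1 ≤ i ∧ i ≤ (n : ℤ) ∧ i ≤ (j.natAbs : ℤ) ∧ j.natAbs ≤ n := by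
  obtain ⟨h1, h2, h3, h4⟩ := h
  rw [Int.abs_eq_natAbs] at h3 h4
  exact ⟨h1, h2, h3, by exact_mod_cast h4⟩

lemma mem_posList {n : ℕ} {p : ℤ × ℤ} :
    p ∈ posList n ↔ (1 ≤ p.1 ∧ p.1 ≤ (n : ℤ) ∧ p.2 ∈ jList n) := by
  obtain ⟨i, j⟩ := p
  simp only [posList, List.mem_flatMap, List.mem_map]
  constructor
  · rintro ⟨a, ha, j', hj', h⟩
    obtain ⟨rfl, rfl⟩ : (a : ℤ) + 1 = i ∧ j' = j := by
      simpa [Prod.ext_iff] using h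
    simp at ha
    obtain ⟨t, ht, rfl⟩ := ha
    exact ⟨by omega, by omega, hj'⟩
  · rintro ⟨h1, h2, h3⟩
    exact ⟨i - 1, by simp; exact ⟨(i - 1).toNat, by omega, by omega⟩, j, h3, by
      simp only [Prod.mk.injEq]; exact ⟨by omega, trivial⟩⟩

lemma mem_Pfin {n : ℕ} {p : ℤ × ℤ} : p ∈ Pfin n ↔ inP n p := by
  simp only [Pfin, Finset.mem_filter, List.mem_toFinset]
  refine ⟨fun h => h.2, fun h => ⟨?_, h⟩⟩
  obtain ⟨i, j⟩ := p
  obtain ⟨h1, h2, h3, h4⟩ := inP_natAbs h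
  exact mem_posList.mpr ⟨h1, h2, mem_jList.mpr ⟨by omega, by omega⟩⟩


/-! ### Structure of order ideals -/

/-- `k = |J ∩ A|`, the number of diagonal elements of `J`. -/
def kIdx (n : ℕ) (J : Finset (ℤ × ℤ)) : ℕ := (J ∩ Aset n).card

/-- `t_i`, the largest `ordKey` in row `i` of `J`. -/
def tJ (n : ℕ) (J : Finset (ℤ × ℤ)) (i : ℤ) : ℤ :=
  (((J.filter (fun p => p.1 = i)).image fun p => ordKey n p.2).max).unbotD 0

lemma mem_Aset {n : ℕ} {p : ℤ × ℤ} :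
    p ∈ Aset n ↔ 1 ≤ p.1 ∧ p.1 ≤ (n : ℤ) ∧ p.2 = p.1 := by
  obtain ⟨i, j⟩ := p
  simp [Aset]
  constructor
  · rintro ⟨t, ht, h1, h2⟩; omega
  · rintro ⟨h1, h2, h3⟩
    exact ⟨(i - 1).toNat, by omega, by omega, by omega⟩

lemma inP_mk {n : ℕ} {i j : ℤ} (h1 : 1 ≤ i) (h3 : i ≤ (j.natAbs : ℤ)) (h4 : j.natAbs ≤ n) :
    inP n (i, j) :=
  ⟨h1, by omega, by rw [Int.abs_eq_natAbs]; omega, by rw [Int.abs_eq_natAbs]; exact_mod_cast h4⟩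

section Ideal

variable {n : ℕ} {J : Finset (ℤ × ℤ)}

lemma ideal_diag_mem (hJ : IsIdeal n J) {i j m : ℤ} (hp : (i, j) ∈ J)
    (h1 : 1 ≤ m) (h2 : m ≤ i) : (m, m) ∈ J := by
  obtain ⟨a1, a2, a3, a4⟩ := inP_natAbs (hJ.1 _ hp)
  refine hJ.2 _ hp _ (mem_Pfin.mpr (inP_mk h1 (by omega) (by omega))) ?_
  exact ⟨h2, by rw [ordKey_pos_self (by omega)]; exact le_trans (by omega) (ordKey_lower (by omega) a3 a4)⟩

lemma diag_mem_iff (hJ : IsIdeal n J) {m : ℤ} :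
    (m, m) ∈ J ↔ 1 ≤ m ∧ m ≤ (kIdx n J : ℤ) := by
  classical
  set S := J ∩ Aset n with hS
  rcases eq_or_ne S ∅ with hemp | hne
  · have hk : kIdx n J = 0 := by rw [kIdx, ← hS, hemp]; simp
    rw [hk]
    constructor
    · intro hm
      obtain ⟨a1, a2, _, _⟩ := inP_natAbs (hJ.1 _ hm)
      have : (m, m) ∈ S := by
        rw [hS]; exact Finset.mem_inter.2 ⟨hm, mem_Aset.mpr ⟨a1, a2, rfl⟩⟩
      rw [hemp] at this; simp at this
    · intro h; push_cast at h; omega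
  · have hSne : S.Nonempty := Finset.nonempty_iff_ne_empty.2 hne
    set T := S.image Prod.fst with hT
    have hTne : T.Nonempty := hSne.image _
    set b := T.max' hTne with hb
    -- the maximal diagonal element
    have hbJ : (b, b) ∈ J ∧ 1 ≤ b ∧ b ≤ (n : ℤ) := by
      obtain ⟨p, hp, hpb⟩ := Finset.mem_image.1 (T.max'_mem hTne)
      rw [← hb] at hpb
      obtain ⟨hpJ, hpA⟩ := Finset.mem_inter.1 hp
      obtain ⟨c1, c2, c3⟩ := mem_Aset.1 hpA
      have hpe : p = (b, b) := by
        rw [Prod.ext_iff]; exact ⟨hpb, by rw [c3, hpb]⟩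
      rw [hpe] at hpJ
      rw [hpb] at c1 c2
      exact ⟨hpJ, c1, c2⟩
    have hmemS : ∀ m' : ℤ, 1 ≤ m' → m' ≤ b → (m', m') ∈ S := by
      intro m' h1 h2
      refine Finset.mem_inter.2 ⟨ideal_diag_mem hJ hbJ.1 h1 h2, mem_Aset.mpr ⟨h1, by omega, rfl⟩⟩
    have hSsub : ∀ p ∈ S, ∃ m' : ℤ, 1 ≤ m' ∧ m' ≤ b ∧ p = (m', m') := by
      intro p hp
      obtain ⟨hpJ, hpA⟩ := Finset.mem_inter.1 hp
      obtain ⟨c1, c2, c3⟩ := mem_Aset.1 hpA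
      refine ⟨p.1, c1, ?_, ?_⟩
      · rw [hb]; exact Finset.le_max' T p.1 (Finset.mem_image.2 ⟨p, hp, rfl⟩)
      · rw [Prod.ext_iff]; exact ⟨rfl, c3⟩
    have hSeq : S = (Finset.Icc (1 : ℤ) b).image (fun m' => (m', m')) := by
      apply Finset.ext; intro p
      constructor
      · intro hp
        obtain ⟨m', h1, h2, rfl⟩ := hSsub p hp
        exact Finset.mem_image.2 ⟨m', Finset.mem_Icc.2 ⟨h1, h2⟩, rfl⟩
      · intro hp
        obtain ⟨m', hm', rfl⟩ := Finset.mem_image.1 hp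
        exact hmemS m' (Finset.mem_Icc.1 hm').1 (Finset.mem_Icc.1 hm').2
    have hcard : (kIdx n J : ℤ) = b := by
      have : kIdx n J = S.card := rfl
      rw [this, hSeq, Finset.card_image_of_injective _ (fun a b h => (Prod.mk.injEq _ _ _ _ ▸ h).1),
        Int.card_Icc]
      have := hbJ.2.1
      omega
    rw [hcard]
    constructor
    · intro hm
      obtain ⟨a1, a2, _, _⟩ := inP_natAbs (hJ.1 _ hm)
      have hmS : (m, m) ∈ S := Finset.mem_inter.2 ⟨hm, mem_Aset.mpr ⟨a1, a2, rfl⟩⟩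
      exact ⟨a1, by rw [hb]; exact Finset.le_max' T m (Finset.mem_image.2 ⟨(m, m), hmS, rfl⟩)⟩
    · rintro ⟨h1, h2⟩
      exact (Finset.mem_inter.1 (hmemS m h1 h2)).1

lemma row_le_k (hJ : IsIdeal n J) {i j : ℤ} (hp : (i, j) ∈ J) : i ≤ (kIdx n J : ℤ) := by
  have h1 : 1 ≤ i := (hJ.1 _ hp).1
  exact ((diag_mem_iff hJ).1 (ideal_diag_mem hJ hp h1 le_rfl)).2

lemma k_le_n (hJ : IsIdeal n J) : (kIdx n J : ℤ) ≤ (n : ℤ) := by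
  rcases Nat.eq_zero_or_pos (kIdx n J) with h | h
  · rw [h]; exact_mod_cast Nat.zero_le n
  · have : ((kIdx n J : ℤ), (kIdx n J : ℤ)) ∈ J :=
      (diag_mem_iff hJ).2 ⟨by exact_mod_cast h, le_rfl⟩
    exact (hJ.1 _ this).2.1

lemma tJ_le {i j : ℤ} (hp : (i, j) ∈ J) : ordKey n j ≤ tJ n J i := by
  classical
  set S := (J.filter (fun p => p.1 = i)).image fun p => ordKey n p.2 with hS
  have hmem : ordKey n j ∈ S :=
    Finset.mem_image.2 ⟨(i, j), Finset.mem_filter.2 ⟨hp, rfl⟩, rfl⟩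
  obtain ⟨b, hb⟩ := Finset.max_of_mem hmem
  have : tJ n J i = b := by rw [tJ, ← hS, hb]; rfl
  rw [this]
  exact_mod_cast hb ▸ Finset.le_max hmem

lemma tJ_exists {i j₀ : ℤ} (hp : (i, j₀) ∈ J) :
    ∃ j, (i, j) ∈ J ∧ ordKey n j = tJ n J i := by
  classical
  set S := (J.filter (fun p => p.1 = i)).image fun p => ordKey n p.2 with hS
  have hmem : ordKey n j₀ ∈ S :=
    Finset.mem_image.2 ⟨(i, j₀), Finset.mem_filter.2 ⟨hp, rfl⟩, rfl⟩
  obtain ⟨b, hb⟩ := Finset.max_of_mem hmem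
  have htb : tJ n J i = b := by rw [tJ, ← hS, hb]; rfl
  obtain ⟨p, hpf, hpb⟩ := Finset.mem_image.1 (Finset.mem_of_max hb)
  obtain ⟨hpJ, hpi⟩ := Finset.mem_filter.1 hpf
  refine ⟨p.2, ?_, by rw [hpb, htb]⟩
  have : p = (i, p.2) := by rw [Prod.ext_iff]; exact ⟨hpi, rfl⟩
  rwa [← this]

lemma ideal_mem_iff (hJ : IsIdeal n J) {i j : ℤ} (hP : inP n (i, j)) :
    (i, j) ∈ J ↔ i ≤ (kIdx n J : ℤ) ∧ ordKey n j ≤ tJ n J i := by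
  constructor
  · exact fun h => ⟨row_le_k hJ h, tJ_le h⟩
  · rintro ⟨h1, h2⟩
    have hii : (i, i) ∈ J := (diag_mem_iff hJ).2 ⟨hP.1, h1⟩
    obtain ⟨τ, hτJ, hτ⟩ := tJ_exists hii
    exact hJ.2 _ hτJ _ (mem_Pfin.mpr hP) ⟨le_rfl, by rw [hτ]; exact h2⟩

lemma tJ_antitone (hJ : IsIdeal n J) {i i' : ℤ} (h1 : 1 ≤ i) (hi : i ≤ i')
    (h2 : i' ≤ (kIdx n J : ℤ)) : tJ n J i' ≤ tJ n J i := by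
  have hii : (i', i') ∈ J := (diag_mem_iff hJ).2 ⟨by omega, h2⟩
  obtain ⟨τ, hτJ, hτ⟩ := tJ_exists hii
  obtain ⟨a1, a2, a3, a4⟩ := inP_natAbs (hJ.1 _ hτJ)
  have : (i, τ) ∈ J :=
    hJ.2 _ hτJ _ (mem_Pfin.mpr (inP_mk h1 (by omega) (by omega))) ⟨hi, le_rfl⟩
  rw [← hτ]
  exact tJ_le this

lemma k_zero_empty (hJ : IsIdeal n J) (h : kIdx n J = 0) : J = ∅ := by
  apply Finset.eq_empty_of_forall_notMem
  rintro ⟨i, j⟩ hp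
  have := row_le_k hJ hp
  have := (hJ.1 _ hp).1
  omega

end Ideal

/-! ### Row decomposition of `wPerm` -/

/-- Columns of `M` in row `i`, in increasing `⋖` order. -/
def rowCols (n : ℕ) (M : Finset (ℤ × ℤ)) (i : ℤ) : List ℤ :=
  (jList n).filter fun j => decide ((i, j) ∈ M)

/-- The product of the swaps of row `i` of `M`. -/
def rowPerm (n : ℕ) (M : Finset (ℤ × ℤ)) (i : ℤ) : Equiv.Perm ℤ :=
  ((rowCols n M i).map fun j => Equiv.swap i j).prod

/-- The product of the row permutations of the first `m` rows. -/
def prePerm (n : ℕ) (M : Finset (ℤ × ℤ)) (m : ℕ) : Equiv.Perm ℤ :=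
  ((List.range m).map fun a : ℕ => rowPerm n M ((a : ℤ) + 1)).prod

/-- The `⋖`-largest column of row `i` of `M`. -/
def cM (n : ℕ) (M : Finset (ℤ × ℤ)) (i : ℤ) : ℤ := (rowCols n M i).getLastD 0

lemma mem_rowCols {n : ℕ} {M : Finset (ℤ × ℤ)} {i j : ℤ} :
    j ∈ rowCols n M i ↔ j ∈ jList n ∧ (i, j) ∈ M := by
  simp [rowCols, List.mem_filter]

lemma prod_flatMap_filter {α β γ : Type*} [Monoid γ] (q : β → Bool) (f : β → γ)
    (F : α → List β) : ∀ l : List α, (((l.flatMap F).filter q).map f).prod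
      = (l.map fun a => (((F a).filter q).map f).prod).prod
  | [] => rfl
  | a :: l => by
    rw [List.flatMap_cons, List.filter_append, List.map_append, List.prod_append,
      List.map_cons, List.prod_cons, prod_flatMap_filter q f F l]

lemma wPerm_eq (n : ℕ) (M : Finset (ℤ × ℤ)) : wPerm n M = prePerm n M n := by
  rw [wPerm, posList, prod_flatMap_filter]
  simp only [List.filter_map, List.map_map]
  simp [prePerm, rowPerm, rowCols, Function.comp_def, ← List.map_eq_flatMap]

lemma prod_apply_fix (L : List (Equiv.Perm ℤ)) (x : ℤ) (h : ∀ g ∈ L, g x = x) :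
    L.prod x = x := by
  induction L with
  | nil => rfl
  | cons g L ih =>
    rw [List.prod_cons, Equiv.Perm.mul_apply, ih (fun g' hg' => h g' (List.mem_cons_of_mem _ hg'))]
    exact h g List.mem_cons_self

lemma prod_append_apply (L₁ L₂ : List (Equiv.Perm ℤ)) (x : ℤ) :
    (L₁ ++ L₂).prod x = L₁.prod (L₂.prod x) := by
  rw [List.prod_append, Equiv.Perm.mul_apply]

lemma rowPerm_fix {n : ℕ} {M : Finset (ℤ × ℤ)} {m x : ℤ} (hM : ∀ p ∈ M, inP n p)
    (h1 : 1 ≤ x) (h2 : x < m) : rowPerm n M m x = x := by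
  apply prod_apply_fix
  intro g hg
  obtain ⟨j, hj, rfl⟩ := List.mem_map.1 hg
  obtain ⟨hjl, hjM⟩ := mem_rowCols.1 hj
  obtain ⟨a1, a2, a3, a4⟩ := inP_natAbs (hM _ hjM)
  refine Equiv.swap_apply_of_ne_of_ne (by omega) ?_
  intro h; rw [← h] at a3; omega

lemma prePerm_congr {n : ℕ} {M₁ M₂ : Finset (ℤ × ℤ)} (m : ℕ)
    (h : ∀ a : ℕ, a < m → ∀ j : ℤ, ((a : ℤ) + 1, j) ∈ M₁ ↔ ((a : ℤ) + 1, j) ∈ M₂) :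
    prePerm n M₁ m = prePerm n M₂ m := by
  unfold prePerm
  congr 1
  apply List.map_congr_left
  intro a ha
  rw [List.mem_range] at ha
  unfold rowPerm rowCols
  congr 2
  apply List.filter_congr
  intro j _
  exact decide_eq_decide.2 (h a ha j)

lemma prePerm_apply_split (n : ℕ) (M : Finset (ℤ × ℤ)) (m b : ℕ) (hmb : m ≤ b) (x : ℤ)
    (hfix : ∀ a : ℕ, m ≤ a → a < b → rowPerm n M ((a : ℤ) + 1) x = x) :
    prePerm n M b x = prePerm n M m x := by
  unfold prePerm
  conv_lhs => rw [show b = m + (b - m) by omega, List.range_add]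
  rw [List.map_append, prod_append_apply]
  have hfix' : (((List.range (b - m)).map fun t => m + t).map
      fun a : ℕ => rowPerm n M ((a : ℤ) + 1)).prod x = x := by
    apply prod_apply_fix
    intro g hg
    rw [List.map_map] at hg
    obtain ⟨t, ht, rfl⟩ := List.mem_map.1 hg
    rw [List.mem_range] at ht
    exact hfix (m + t) (by omega) (by omega)
  rw [hfix']

lemma prePerm_apply_last (n : ℕ) (M : Finset (ℤ × ℤ)) (m : ℕ) (hm1 : 1 ≤ m) (x : ℤ) :
    prePerm n M m x = prePerm n M (m - 1) (rowPerm n M (m : ℤ) x) := by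
  unfold prePerm
  conv_lhs => rw [show m = (m - 1) + 1 by omega, List.range_succ]
  rw [List.map_append, prod_append_apply]
  have : ((m - 1 : ℕ) : ℤ) + 1 = (m : ℤ) := by omega
  simp only [List.map_cons, List.map_nil, List.prod_cons, List.prod_nil, mul_one, this]

lemma wPerm_row (n : ℕ) (M : Finset (ℤ × ℤ)) (hM : ∀ p ∈ M, inP n p) (m : ℕ)
    (hm1 : 1 ≤ m) (hmn : m ≤ n) :
    wPerm n M (m : ℤ) = prePerm n M (m - 1) (rowPerm n M (m : ℤ) (m : ℤ)) := by
  rw [wPerm_eq]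
  have h1 : prePerm n M n (m : ℤ) = prePerm n M m (m : ℤ) := by
    apply prePerm_apply_split n M m n hmn
    intro a ha _
    exact rowPerm_fix hM (by exact_mod_cast hm1) (by push_cast; omega)
  rw [h1, prePerm_apply_last n M m hm1]

lemma swap_prod_getLast (n : ℕ) (i : ℤ) : ∀ (l : List ℤ) (hl : l ≠ []),
    l.Pairwise (fun a b => ordKey n a < ordKey n b) →
    (∀ e ∈ l, e = i ∨ ordKey n i < ordKey n e) →
    ((l.map fun j => Equiv.swap i j).prod) i = l.getLast hl
  | [], hl, _, _ => absurd rfl hl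
  | [a], _, _, _ => by simp
  | a :: b :: t, _, hp, hb => by
    have hne : (b :: t) ≠ [] := by simp
    have ih := swap_prod_getLast n i (b :: t) hne (List.pairwise_cons.1 hp).2
      (fun e he => hb e (List.mem_cons_of_mem _ he))
    rw [List.map_cons, List.prod_cons, Equiv.Perm.mul_apply, ih,
      List.getLast_cons hne]
    have hgmem : (b :: t).getLast hne ∈ b :: t := List.getLast_mem hne
    have hag : ordKey n a < ordKey n ((b :: t).getLast hne) :=
      (List.pairwise_cons.1 hp).1 _ hgmem
    have hia : ordKey n i ≤ ordKey n a := by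
      rcases hb a List.mem_cons_self with h | h
      · rw [h]
      · omega
    refine Equiv.swap_apply_of_ne_of_ne ?_ ?_
    · intro h; rw [h] at hag; omega
    · intro h; rw [h] at hag; omega

lemma getLast_key_max (n : ℕ) : ∀ (l : List ℤ) (hl : l ≠ []),
    l.Pairwise (fun a b => ordKey n a < ordKey n b) →
    ∀ a ∈ l, ordKey n a ≤ ordKey n (l.getLast hl)
  | [], hl, _ => absurd rfl hl
  | [x], _, _ => by
    intro a ha
    rw [List.mem_singleton] at ha
    rw [ha]; rfl
  | x :: y :: t, _, hp => by
    intro a ha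
    have hne : (y :: t) ≠ [] := by simp
    have ih := getLast_key_max n (y :: t) hne (List.pairwise_cons.1 hp).2
    rw [List.getLast_cons hne]
    rcases List.mem_cons.1 ha with rfl | ha'
    · have : ordKey n a < ordKey n ((y :: t).getLast hne) :=
        (List.pairwise_cons.1 hp).1 _ (List.getLast_mem hne)
      omega
    · exact ih a ha'

lemma jList_eq (n : ℕ) : jList n = (List.range n).map (fun t : ℕ => ((t : ℤ) + 1))
    ++ (List.range n).map (fun t : ℕ => ((t : ℤ) - n)) := by
  simp [jList, List.map_map, List.map_flatMap]
  rw [← List.map_eq_flatMap, ← List.map_eq_flatMap]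

lemma pairwise_jList (n : ℕ) :
    (jList n).Pairwise (fun a b => ordKey n a < ordKey n b) := by
  rw [jList_eq, List.pairwise_append]
  refine ⟨?_, ?_, ?_⟩
  · rw [List.pairwise_map]
    refine (List.pairwise_lt_range (n := n)).imp ?_
    intro a b hab
    have h1 : ordKey n ((a : ℤ) + 1) = (a : ℤ) + 1 := if_pos (by omega)
    have h2 : ordKey n ((b : ℤ) + 1) = (b : ℤ) + 1 := if_pos (by omega)
    rw [h1, h2]; omega
  · rw [List.pairwise_map]
    refine List.Pairwise.imp_of_mem ?_ (List.pairwise_lt_range (n := n))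
    intro a b ha hb hab
    rw [List.mem_range] at ha hb
    have h1 : ordKey n ((a : ℤ) - n) = 2 * n + 1 + ((a : ℤ) - n) := if_neg (by omega)
    have h2 : ordKey n ((b : ℤ) - n) = 2 * n + 1 + ((b : ℤ) - n) := if_neg (by omega)
    rw [h1, h2]; omega
  · intro x hx y hy
    obtain ⟨a, ha, rfl⟩ := List.mem_map.1 hx
    obtain ⟨b, hb, rfl⟩ := List.mem_map.1 hy
    rw [List.mem_range] at ha hb
    have h1 : ordKey n ((a : ℤ) + 1) = (a : ℤ) + 1 := if_pos (by omega)
    have h2 : ordKey n ((b : ℤ) - n) = 2 * n + 1 + ((b : ℤ) - n) := if_neg (by omega)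
    rw [h1, h2]; omega

lemma pairwise_rowCols (n : ℕ) (M : Finset (ℤ × ℤ)) (i : ℤ) :
    (rowCols n M i).Pairwise (fun a b => ordKey n a < ordKey n b) :=
  (pairwise_jList n).filter _

section CMLemmas

variable {n : ℕ} {M : Finset (ℤ × ℤ)} {i : ℤ}

lemma rowCols_ne_nil (hii : (i, i) ∈ M) (h1 : 1 ≤ i) (hn : i ≤ (n : ℤ)) :
    rowCols n M i ≠ [] :=
  List.ne_nil_of_mem (mem_rowCols.2 ⟨mem_jList.2 ⟨by omega, by omega⟩, hii⟩)

lemma cM_mem (hne : rowCols n M i ≠ []) : (i, cM n M i) ∈ M := by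
  have : cM n M i = (rowCols n M i).getLast hne := by
    rw [cM, List.getLastD_eq_getLast?, List.getLast?_eq_getLast hne]; rfl
  rw [this]
  exact (mem_rowCols.1 (List.getLast_mem hne)).2

lemma cM_key_max (hne : rowCols n M i ≠ []) {j : ℤ} (hj : (i, j) ∈ M)
    (hjl : j ∈ jList n) : ordKey n j ≤ ordKey n (cM n M i) := by
  have hc : cM n M i = (rowCols n M i).getLast hne := by
    rw [cM, List.getLastD_eq_getLast?, List.getLast?_eq_getLast hne]; rfl
  rw [hc]
  exact getLast_key_max n _ hne (pairwise_rowCols n M i) j (mem_rowCols.2 ⟨hjl, hj⟩)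

lemma rowPerm_apply_self (hM : ∀ p ∈ M, inP n p) (hii : (i, i) ∈ M)
    (h1 : 1 ≤ i) (hn : i ≤ (n : ℤ)) : rowPerm n M i i = cM n M i := by
  have hne := rowCols_ne_nil hii h1 hn
  have hc : cM n M i = (rowCols n M i).getLast hne := by
    rw [cM, List.getLastD_eq_getLast?, List.getLast?_eq_getLast hne]; rfl
  rw [rowPerm, hc]
  apply swap_prod_getLast n i _ hne (pairwise_rowCols n M i)
  intro e he
  obtain ⟨hel, heM⟩ := mem_rowCols.1 he
  obtain ⟨a1, a2, a3, a4⟩ := inP_natAbs (hM _ heM)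
  rcases eq_or_ne e i with h | h
  · exact Or.inl h
  · right
    rw [ordKey_pos_self (by omega)]
    simp only [ordKey]
    split_ifs with hpos
    · omega
    · omega

end CMLemmas

/-! ### Structure of `M_O(J)` -/

section MStruct

variable {n : ℕ} {O J : Finset (ℤ × ℤ)}

lemma MO_subset : MO n O J ⊆ J := by
  intro p hp
  rcases Finset.mem_union.1 hp with h | h
  · exact (Finset.mem_inter.1 h).1
  · exact (Finset.mem_filter.1 h).1

lemma MO_inP (hJ : IsIdeal n J) : ∀ p ∈ MO n O J, inP n p :=
  fun p hp => hJ.1 p (MO_subset hp)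

lemma diag_mem_MO (hA : Aset n ⊆ O) (hJ : IsIdeal n J) {i : ℤ}
    (h1 : 1 ≤ i) (h2 : i ≤ (kIdx n J : ℤ)) : (i, i) ∈ MO n O J := by
  have hiJ : (i, i) ∈ J := (diag_mem_iff hJ).2 ⟨h1, h2⟩
  have hin : i ≤ (n : ℤ) := le_trans h2 (k_le_n hJ)
  exact Finset.mem_union.2 (Or.inl (Finset.mem_inter.2
    ⟨hiJ, hA (mem_Aset.2 ⟨h1, hin, rfl⟩)⟩))

lemma maxPrec_key (hJ : IsIdeal n J) {i j : ℤ} (h : (i, j) ∈ maxPrec n J) :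
    ordKey n j = tJ n J i := by
  obtain ⟨hjJ, hmax⟩ := Finset.mem_filter.1 h
  refine le_antisymm (tJ_le hjJ) ?_
  obtain ⟨τ, hτJ, hτk⟩ := tJ_exists hjJ
  have heq := hmax (i, τ) hτJ ⟨le_rfl, by rw [hτk]; exact tJ_le hjJ⟩
  have hτj : τ = j := congrArg Prod.snd heq
  rw [← hτj, hτk]

lemma rowCols_MO_ne_nil (hA : Aset n ⊆ O) (hJ : IsIdeal n J) {m : ℕ}
    (h1 : 1 ≤ m) (h2 : m ≤ kIdx n J) : rowCols n (MO n O J) (m : ℤ) ≠ [] := by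
  have hk := k_le_n hJ
  exact rowCols_ne_nil (diag_mem_MO hA hJ (by omega) (by omega)) (by omega) (by omega)

lemma mem_MO_iff (hA : Aset n ⊆ O) (hO : O ⊆ Pfin n) (hJ : IsIdeal n J) {m : ℕ}
    (h1 : 1 ≤ m) (h2 : m ≤ kIdx n J) (j : ℤ) :
    ((m : ℤ), j) ∈ MO n O J ↔
      (ordKey n j ≤ ordKey n (cM n (MO n O J) (m : ℤ)) ∧
        (((m : ℤ), j) ∈ O ∨ j = cM n (MO n O J) (m : ℤ))) := by
  have hne := rowCols_MO_ne_nil hA hJ h1 h2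
  have hcM : ((m : ℤ), cM n (MO n O J) (m : ℤ)) ∈ MO n O J := cM_mem hne
  have hcJ : ((m : ℤ), cM n (MO n O J) (m : ℤ)) ∈ J := MO_subset hcM
  obtain ⟨b1, b2, b3, b4⟩ := inP_natAbs (hJ.1 _ hcJ)
  constructor
  · intro h
    obtain ⟨a1, a2, a3, a4⟩ := inP_natAbs (MO_inP hJ _ h)
    have hkey : ordKey n j ≤ ordKey n (cM n (MO n O J) (m : ℤ)) :=
      cM_key_max hne h (mem_jList.2 ⟨by omega, by omega⟩)
    refine ⟨hkey, ?_⟩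
    rcases Finset.mem_union.1 h with h' | h'
    · exact Or.inl (Finset.mem_inter.1 h').2
    · right
      have hkj : ordKey n j = tJ n J (m : ℤ) := maxPrec_key hJ h'
      have hkc : ordKey n (cM n (MO n O J) (m : ℤ)) ≤ tJ n J (m : ℤ) := tJ_le hcJ
      exact ordKey_inj a4 b4 (by omega)
  · rintro ⟨hkey, h' | h'⟩
    · have hP : inP n ((m : ℤ), j) := mem_Pfin.1 (hO h')
      have hJmem : ((m : ℤ), j) ∈ J := by
        rw [ideal_mem_iff hJ hP]
        exact ⟨by exact_mod_cast h2, le_trans hkey (tJ_le hcJ)⟩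
      exact Finset.mem_union.2 (Or.inl (Finset.mem_inter.2 ⟨hJmem, h'⟩))
    · rw [h']; exact hcM

lemma t_eq_c_of_max (hA : Aset n ⊆ O) (hO : O ⊆ Pfin n) (hJ : IsIdeal n J) {m : ℕ}
    (h1 : 1 ≤ m) (h2 : m ≤ kIdx n J)
    (hcond : ∀ i' j' : ℤ, (i', j') ∈ J → (m : ℤ) < i' → ordKey n j' < tJ n J (m : ℤ)) :
    tJ n J (m : ℤ) = ordKey n (cM n (MO n O J) (m : ℤ)) := by
  have hne := rowCols_MO_ne_nil hA hJ h1 h2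
  have hcJ : ((m : ℤ), cM n (MO n O J) (m : ℤ)) ∈ J := MO_subset (cM_mem hne)
  obtain ⟨τ, hτJ, hτk⟩ :=
    tJ_exists (show ((m : ℤ), (m : ℤ)) ∈ J from (diag_mem_iff hJ).2 ⟨by omega, by omega⟩)
  obtain ⟨a1, a2, a3, a4⟩ := inP_natAbs (hJ.1 _ hτJ)
  have hmax : ((m : ℤ), τ) ∈ maxPrec n J := by
    refine Finset.mem_filter.2 ⟨hτJ, ?_⟩
    rintro ⟨i', j'⟩ hq ⟨hle, hkey⟩
    dsimp only at hle hkey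
    rcases eq_or_lt_of_le hle with h | h
    · obtain ⟨c1, c2, c3, c4⟩ := inP_natAbs (hJ.1 _ hq)
      have hq' : ((m : ℤ), j') ∈ J := by rw [h]; exact hq
      have hkey' : ordKey n j' ≤ tJ n J (m : ℤ) := tJ_le hq'
      rw [hτk] at hkey
      have hjτ : j' = τ := ordKey_inj c4 a4 (by omega)
      rw [hjτ, ← h]
    · have := hcond i' j' hq h
      rw [hτk] at hkey
      omega
  have hMO : ((m : ℤ), τ) ∈ MO n O J := Finset.mem_union.2 (Or.inr hmax)
  have hkc : ordKey n τ ≤ ordKey n (cM n (MO n O J) (m : ℤ)) :=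
    cM_key_max hne hMO (mem_jList.2 ⟨by omega, by omega⟩)
  have hkc' : ordKey n (cM n (MO n O J) (m : ℤ)) ≤ tJ n J (m : ℤ) := tJ_le hcJ
  omega

lemma t_last (hA : Aset n ⊆ O) (hO : O ⊆ Pfin n) (hJ : IsIdeal n J)
    (h1 : 1 ≤ kIdx n J) :
    tJ n J ((kIdx n J : ℕ) : ℤ) = ordKey n (cM n (MO n O J) ((kIdx n J : ℕ) : ℤ)) := by
  refine t_eq_c_of_max hA hO hJ h1 le_rfl ?_
  intro i' j' hq hlt
  have := row_le_k hJ hq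
  omega

lemma t_step (hA : Aset n ⊆ O) (hO : O ⊆ Pfin n) (hJ : IsIdeal n J) {m : ℕ}
    (h1 : 1 ≤ m) (h2 : m < kIdx n J) :
    tJ n J (m : ℤ) = max (ordKey n (cM n (MO n O J) (m : ℤ))) (tJ n J ((m : ℤ) + 1)) := by
  have hκ : ordKey n (cM n (MO n O J) (m : ℤ)) ≤ tJ n J (m : ℤ) :=
    tJ_le (MO_subset (cM_mem (rowCols_MO_ne_nil hA hJ h1 (by omega))))
  have hmono : tJ n J ((m : ℤ) + 1) ≤ tJ n J (m : ℤ) :=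
    tJ_antitone hJ (by omega) (by omega) (by omega)
  rcases eq_or_lt_of_le hmono with h | h
  · omega
  · have heq : tJ n J (m : ℤ) = ordKey n (cM n (MO n O J) (m : ℤ)) := by
      refine t_eq_c_of_max hA hO hJ h1 (by omega) ?_
      intro i' j' hq hlt
      have hik : i' ≤ (kIdx n J : ℤ) := row_le_k hJ hq
      have h1' : tJ n J i' ≤ tJ n J ((m : ℤ) + 1) := tJ_antitone hJ (by omega) (by omega) hik
      have := tJ_le (n := n) hq
      omega
    omega

end MStruct

end Stmt13Aux


open Stmt13Aux in
/-- The monomials `z^{ξ(1_{M_O(J)})} = ∏_{i=1}^k z_{i,w^{O,J}(i)}` over all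
order ideals `J` are pairwise distinct; equivalently, the map
`J ↦ {(i, w^{O,J}(i)) : 1 ≤ i ≤ |J ∩ A|}` is injective on order ideals of `P`. -/
theorem stmt13 (n : ℕ) (O : Finset (ℤ × ℤ)) (hA : Aset n ⊆ O) (hO : O ⊆ Pfin n)
    (J₁ J₂ : Finset (ℤ × ℤ)) (h1 : IsIdeal n J₁) (h2 : IsIdeal n J₂)
    (heq : (Finset.Icc (1 : ℤ) (((J₁ ∩ Aset n).card : ℤ))).image
        (fun i => ((i, wOJ n O J₁ i) : ℤ × ℤ))
      = (Finset.Icc (1 : ℤ) (((J₂ ∩ Aset n).card : ℤ))).image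
        (fun i => ((i, wOJ n O J₂ i) : ℤ × ℤ))) :
    J₁ = J₂ := by
  classical
  have hk : kIdx n J₁ = kIdx n J₂ := by
    have hinj1 : Function.Injective (fun i : ℤ => ((i, wOJ n O J₁ i) : ℤ × ℤ)) :=
      fun a b h => congrArg Prod.fst h
    have hinj2 : Function.Injective (fun i : ℤ => ((i, wOJ n O J₂ i) : ℤ × ℤ)) :=
      fun a b h => congrArg Prod.fst h
    have hc := congrArg Finset.card heq
    rw [Finset.card_image_of_injective _ hinj1, Finset.card_image_of_injective _ hinj2,
      Int.card_Icc, Int.card_Icc] at hc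
    have hto : ∀ K : ℕ, ((K : ℤ) + 1 - 1).toNat = K := fun K => by omega
    rw [hto, hto] at hc
    exact hc
  have hkn : (kIdx n J₁ : ℤ) ≤ (n : ℤ) := k_le_n h1
  have hMO1 := MO_inP (O := O) h1
  have hMO2 := MO_inP (O := O) h2
  have hw : ∀ m : ℕ, 1 ≤ m → m ≤ kIdx n J₁ →
      wPerm n (MO n O J₁) ((m : ℤ)) = wPerm n (MO n O J₂) ((m : ℤ)) := by
    intro m hm1 hmk
    have hmem : ((m : ℤ), wOJ n O J₁ (m : ℤ)) ∈
        (Finset.Icc (1 : ℤ) (((J₁ ∩ Aset n).card : ℤ))).image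
          (fun i => ((i, wOJ n O J₁ i) : ℤ × ℤ)) :=
      Finset.mem_image.2 ⟨(m : ℤ), Finset.mem_Icc.2 ⟨by omega, by exact_mod_cast hmk⟩, rfl⟩
    rw [heq] at hmem
    obtain ⟨i', _, heq'⟩ := Finset.mem_image.1 hmem
    have hi'm : i' = (m : ℤ) := congrArg Prod.fst heq'
    have hsnd : wOJ n O J₂ i' = wOJ n O J₁ (m : ℤ) := congrArg Prod.snd heq'
    rw [hi'm] at hsnd
    simp only [wOJ, Equiv.Perm.mul_apply] at hsnd
    exact ((wPerm n O)⁻¹.injective hsnd).symm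
  have hrow : ∀ d : ℕ, ∀ m : ℕ, 1 ≤ m → m ≤ kIdx n J₁ → m ≤ d →
      (cM n (MO n O J₁) (m : ℤ) = cM n (MO n O J₂) (m : ℤ)) ∧
      (∀ j : ℤ, ((m : ℤ), j) ∈ MO n O J₁ ↔ ((m : ℤ), j) ∈ MO n O J₂) := by
    intro d
    induction d with
    | zero => intro m hm1 _ hmd; exact absurd hmd (by omega)
    | succ d ih =>
      intro m hm1 hmk hmd
      rcases le_or_gt m d with h | h
      · exact ih m hm1 hmk h
      · have hpre : prePerm n (MO n O J₁) (m - 1) = prePerm n (MO n O J₂) (m - 1) := by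
          apply prePerm_congr
          intro a ha j
          have hcast : ((a : ℤ) + 1) = (((a + 1 : ℕ)) : ℤ) := by push_cast; ring
          rw [hcast]
          exact (ih (a + 1) (by omega) (by omega) (by omega)).2 j
        have hw' := hw m hm1 hmk
        rw [wPerm_row n _ hMO1 m hm1 (by omega), wPerm_row n _ hMO2 m hm1 (by omega)] at hw'
        rw [rowPerm_apply_self hMO1 (diag_mem_MO hA h1 (by omega) (by omega))
            (by omega) (by omega),
          rowPerm_apply_self hMO2 (diag_mem_MO hA h2 (by omega) (by omega))
            (by omega) (by omega)] at hw'
        rw [hpre] at hw'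
        have hc : cM n (MO n O J₁) (m : ℤ) = cM n (MO n O J₂) (m : ℤ) :=
          (prePerm n (MO n O J₂) (m - 1)).injective hw'
        refine ⟨hc, fun j => ?_⟩
        rw [mem_MO_iff hA hO h1 hm1 hmk j, mem_MO_iff hA hO h2 hm1 (by omega) j, hc]
  have ht : ∀ d : ℕ, ∀ m : ℕ, 1 ≤ m → m ≤ kIdx n J₁ → kIdx n J₁ - m ≤ d →
      tJ n J₁ (m : ℤ) = tJ n J₂ (m : ℤ) := by
    intro d
    induction d with
    | zero =>
      intro m hm1 hmk hd
      have e1 := t_last hA hO h1 (by omega)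
      have e2 := t_last hA hO h2 (by omega)
      rw [← hk] at e2
      rw [show (m : ℤ) = ((kIdx n J₁ : ℕ) : ℤ) by omega, e1, e2]
      exact congrArg (ordKey n) (hrow (kIdx n J₁) (kIdx n J₁) (by omega) le_rfl le_rfl).1
    | succ d ih =>
      intro m hm1 hmk hd
      rcases le_or_gt (kIdx n J₁ - m) d with h | h
      · exact ih m hm1 hmk h
      · have hmlt : m < kIdx n J₁ := by omega
        have e1 := t_step hA hO h1 hm1 hmlt
        have e2 := t_step hA hO h2 hm1 (by omega)
        rw [e1, e2, (hrow m m hm1 (by omega) le_rfl).1]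
        have hnext := ih (m + 1) (by omega) (by omega) (by omega)
        rw [show ((m : ℤ) + 1) = (((m + 1 : ℕ)) : ℤ) by push_cast; ring, hnext]
  apply Finset.ext
  rintro ⟨i, j⟩
  constructor
  · intro hp
    have hP := h1.1 _ hp
    rw [ideal_mem_iff h1 hP] at hp
    rw [ideal_mem_iff h2 hP]
    obtain ⟨hik, hkey⟩ := hp
    have h1i : 1 ≤ i := hP.1
    have hm := ht (kIdx n J₁) i.toNat (by omega) (by omega) (by omega)
    rw [show ((i.toNat : ℕ) : ℤ) = i by omega] at hm
    exact ⟨by omega, by rw [← hm]; exact hkey⟩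
  · intro hp
    have hP := h2.1 _ hp
    rw [ideal_mem_iff h2 hP] at hp
    rw [ideal_mem_iff h1 hP]
    obtain ⟨hik, hkey⟩ := hp
    have h1i : 1 ≤ i := hP.1
    have hm := ht (kIdx n J₁) i.toNat (by omega) (by omega) (by omega)
    rw [show ((i.toNat : ℕ) : ℤ) = i by omega] at hm
    exact ⟨by omega, by rw [hm]; exact hkey⟩


end
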